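/- Let X and Y be bounded-variation paths (or more generally group-like tensor series with factorial decay). Then log S(X) has infinite radius of convergence if and only if log S(Y ⊔ X ⊔ reverse(Y)) has infinite radius of convergence, where ⊔ denotes concatenation, S is the signature, and S(Y ⊔ X ⊔ reverse(Y)) = S(Y) ⊗ S(X) ⊗ S(Y)^{-1}. -/

import Mathlib

open scoped TensorProduct

noncomputable section

variable (V : Type*) [NormedAddCommGroup V] [NormedSpace ℝ V]

/-- The `n`-th tensor power `V^⊗n`. -/
abbrev TComp (n : ℕ) := ⨂[ℝ] (_ : Fin n), V

/-- Formal tensor series `T((V)) = Π_{n≥0} V^⊗n`. -/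
def TSeries := ∀ n : ℕ, TComp V n

variable {V}

/-- The projective tensor (semi)norm on `V^⊗n`. -/
def tnorm {n : ℕ} (x : TComp V n) : ℝ := PiTensorProduct.projectiveSeminorm x

/-- Multiplication `V^⊗k ⊗ V^⊗m → V^⊗(k+m)`. -/
def mulComp {k m : ℕ} (x : TComp V k) (y : TComp V m) : TComp V (k + m) :=
  (PiTensorProduct.reindex ℝ (fun _ => V) finSumFinEquiv)
    ((PiTensorProduct.tmulEquiv ℝ V) (x ⊗ₜ[ℝ] y))

/-- Degree cast `V^⊗k ≃ V^⊗m` for `k = m`. -/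
def castComp {k m : ℕ} (h : k = m) (x : TComp V k) : TComp V m :=
  (PiTensorProduct.reindex ℝ (fun _ => V) (finCongr h)) x

/-- The product of tensor series: `(ξ ⊗ η)_n = Σ_{k=0}^{n} ξ_k ⊗ η_{n−k}`. -/
def seriesMul (ξ η : TSeries V) : TSeries V := fun n =>
  ∑ k ∈ (Finset.range (n + 1)).attach,
    castComp (by have := Finset.mem_range.mp k.2; omega)
      (mulComp (ξ k.1) (η (n - k.1)))

/-- The unit tensor series `1 = (1, 0, 0, …)`. -/
def oneSeries : TSeries V := fun n =>
  match n with
  | 0 => PiTensorProduct.tprod ℝ (fun i : Fin 0 => i.elim0)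
  | _ + 1 => 0

/-- `ξ` has factorial decay: `‖πₙ ξ‖ ≤ C ω^{n/p}/(n/p)!` for `n ≥ 1`. -/
def FactorialDecay (ξ : TSeries V) : Prop :=
  ∃ C ω p : ℝ, 0 < C ∧ 0 < ω ∧ 1 ≤ p ∧
    ∀ n : ℕ, 1 ≤ n →
      tnorm (ξ n) ≤ C * ω ^ ((n : ℝ) / p) / Real.Gamma ((n : ℝ) / p + 1)

/-- `ξ` has infinite radius of convergence: `Σ ‖πₙ ξ‖ zⁿ` converges for every `z`. -/
def InfiniteROC (ξ : TSeries V) : Prop :=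
  ∀ z : ℝ, Summable fun n => tnorm (ξ n) * z ^ n

/-! ### Auxiliary norm lemmas -/

lemma tnorm_nonneg {n : ℕ} (x : TComp V n) : 0 ≤ tnorm x :=
  apply_nonneg _ _

lemma seminorm_list_sum_le {W : Type*} [AddCommGroup W] [Module ℝ W] (ν : Seminorm ℝ W) :
    ∀ l : List W, ν l.sum ≤ (l.map ν).sum := by
  intro l
  induction l with
  | nil => simp
  | cons a l ih =>
    simp only [List.sum_cons, List.map_cons]
    exact le_trans (map_add_le_add ν a l.sum) (by linarith)

lemma seminorm_finset_sum_le {W : Type*} [AddCommGroup W] [Module ℝ W] (ν : Seminorm ℝ W)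
    {A : Type*} (s : Finset A) (f : A → W) : ν (∑ i ∈ s, f i) ≤ ∑ i ∈ s, ν (f i) := by
  induction s using Finset.cons_induction with
  | empty => simp
  | cons a s ha ih =>
    rw [Finset.sum_cons, Finset.sum_cons]
    exact le_trans (map_add_le_add ν _ _) (by linarith)

open PiTensorProduct in
lemma seminorm_dominated {k : ℕ} (ν : Seminorm ℝ (TComp V k)) (K : ℝ) (hK : 0 ≤ K)
    (h : ∀ m : Fin k → V, ν (tprod ℝ m) ≤ K * ∏ i, ‖m i‖) (x : TComp V k) :
    ν x ≤ K * projectiveSeminorm x := by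
  rw [projectiveSeminorm_apply]
  letI := nonempty_subtype.mpr (nonempty_lifts x)
  rw [Real.mul_iInf_of_nonneg hK]
  refine le_ciInf fun p => ?_
  obtain ⟨p, hp⟩ := p
  rw [mem_lifts_iff] at hp
  calc ν x = ν (List.sum (List.map (fun a => a.1 • tprod ℝ a.2) (FreeAddMonoid.toList p))) := by rw [hp]
  _ ≤ (List.map ν (List.map (fun a => a.1 • tprod ℝ a.2) (FreeAddMonoid.toList p))).sum :=
      seminorm_list_sum_le ν _
  _ ≤ (List.map (fun a => K * (‖a.1‖ * ∏ i, ‖a.2 i‖)) (FreeAddMonoid.toList p)).sum := by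
      rw [List.map_map]
      refine List.sum_le_sum fun a _ => ?_
      simp only [Function.comp_apply, map_smul_eq_mul]
      calc ‖a.1‖ * ν (tprod ℝ a.2) ≤ ‖a.1‖ * (K * ∏ i, ‖a.2 i‖) :=
            mul_le_mul_of_nonneg_left (h a.2) (norm_nonneg _)
      _ = K * (‖a.1‖ * ∏ i, ‖a.2 i‖) := by ring
  _ = K * projectiveSeminormAux p := by
      simp only [projectiveSeminormAux, Function.comp_apply]
      rw [← List.sum_map_mul_left]

open PiTensorProduct in
lemma tnorm_reindex_le {k m : ℕ} (e : Fin k ≃ Fin m) (x : TComp V k) :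
    tnorm ((reindex ℝ (fun _ => V) e) x) ≤ tnorm x := by
  have := seminorm_dominated
    (projectiveSeminorm.comp (reindex ℝ (fun _ => V) e).toLinearMap) 1 zero_le_one
    (fun f => ?_) x
  · simpa [tnorm] using this
  · simp only [Seminorm.comp_apply, LinearEquiv.coe_toLinearMap, reindex_tprod]
    refine le_trans (projectiveSeminorm_tprod_le _) (le_of_eq ?_)
    rw [one_mul]
    exact Equiv.prod_comp e.symm (fun i => ‖f i‖)

open PiTensorProduct in
lemma tnorm_castComp {k m : ℕ} (h : k = m) (x : TComp V k) :
    tnorm (castComp h x) = tnorm x := by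
  refine le_antisymm (tnorm_reindex_le _ x) ?_
  have h2 := tnorm_reindex_le (finCongr h).symm (castComp h x)
  rwa [castComp, ← LinearEquiv.trans_apply, reindex_trans, Equiv.self_trans_symm,
    reindex_refl, LinearEquiv.refl_apply] at h2

open PiTensorProduct in
lemma tnorm_mulComp_le {k m : ℕ} (x : TComp V k) (y : TComp V m) :
    tnorm (mulComp x y) ≤ tnorm x * tnorm y := by
  have step1 : ∀ (f : Fin k → V) (y : TComp V m),
      tnorm (mulComp (tprod ℝ f) y) ≤ (∏ i, ‖f i‖) * tnorm y := by
    intro f y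
    have := seminorm_dominated
      (projectiveSeminorm.comp
        (((reindex ℝ (fun _ => V) finSumFinEquiv).toLinearMap.comp
          (tmulEquiv ℝ V).toLinearMap).comp
          (TensorProduct.mk ℝ (TComp V k) (TComp V m) (tprod ℝ f))))
      (∏ i, ‖f i‖) (Finset.prod_nonneg fun _ _ => norm_nonneg _) (fun g => ?_) y
    · exact this
    · simp only [Seminorm.comp_apply, LinearMap.coe_comp, LinearEquiv.coe_toLinearMap,
        Function.comp_apply, TensorProduct.mk_apply, tmulEquiv_apply, reindex_tprod]
      refine le_trans (projectiveSeminorm_tprod_le _) (le_of_eq ?_)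
      rw [Equiv.prod_comp finSumFinEquiv.symm
        (fun j => ‖Sum.elim f g j‖), Fintype.prod_sum_type]
      rfl
  have step2 := seminorm_dominated
    (projectiveSeminorm.comp
      (((reindex ℝ (fun _ => V) finSumFinEquiv).toLinearMap.comp
        (tmulEquiv ℝ V).toLinearMap).comp
        ((TensorProduct.mk ℝ (TComp V k) (TComp V m)).flip y)))
    (tnorm y) (tnorm_nonneg y) (fun f => ?_) x
  · calc tnorm (mulComp x y) ≤ tnorm y * tnorm x := step2
    _ = tnorm x * tnorm y := mul_comm _ _
  · refine le_trans (step1 f y) (le_of_eq (mul_comm _ _))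

/-! ### The graded product as `mulTo`, and its algebraic properties -/

/-- Total version of the graded product landing in a prescribed degree. -/
def mulTo (n : ℕ) {a b : ℕ} (x : TComp V a) (y : TComp V b) : TComp V n :=
  if h : a + b = n then castComp h (mulComp x y) else 0

lemma mulTo_eq {n a b : ℕ} (h : a + b = n) (x : TComp V a) (y : TComp V b) :
    mulTo n x y = castComp h (mulComp x y) := dif_pos h

private def mulL (a b : ℕ) : TComp V a →ₗ[ℝ] TComp V b →ₗ[ℝ] TComp V (a + b) :=
  (TensorProduct.mk ℝ _ _).compr₂ (TensorPower.mulEquiv : _ ≃ₗ[ℝ] TComp V (a + b)).toLinearMap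

lemma mulComp_sum_left {a b : ℕ} {A : Type*} (s : Finset A) (f : A → TComp V a)
    (y : TComp V b) : mulComp (∑ i ∈ s, f i) y = ∑ i ∈ s, mulComp (f i) y :=
  map_sum ((mulL a b).flip y) f s

lemma mulComp_sum_right {a b : ℕ} {A : Type*} (s : Finset A) (x : TComp V a)
    (f : A → TComp V b) : mulComp x (∑ i ∈ s, f i) = ∑ i ∈ s, mulComp x (f i) :=
  map_sum (mulL a b x) f s

lemma mulComp_zero_left {a b : ℕ} (y : TComp V b) :
    mulComp (0 : TComp V a) y = 0 := map_zero ((mulL a b).flip y)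

lemma mulComp_zero_right {a b : ℕ} (x : TComp V a) :
    mulComp x (0 : TComp V b) = 0 := map_zero (mulL a b x)

lemma mulComp_smul_left {a b : ℕ} (r : ℝ) (x : TComp V a) (y : TComp V b) :
    mulComp (r • x) y = r • mulComp x y := map_smul ((mulL a b).flip y) r x

lemma mulComp_smul_right {a b : ℕ} (r : ℝ) (x : TComp V a) (y : TComp V b) :
    mulComp x (r • y) = r • mulComp x y := map_smul (mulL a b x) r y

lemma mulComp_add_left {a b : ℕ} (x x' : TComp V a) (y : TComp V b) :
    mulComp (x + x') y = mulComp x y + mulComp x' y := map_add ((mulL a b).flip y) x x'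

lemma mulComp_add_right {a b : ℕ} (x : TComp V a) (y y' : TComp V b) :
    mulComp x (y + y') = mulComp x y + mulComp x y' := map_add (mulL a b x) y y'

lemma castComp_smul {k m : ℕ} (h : k = m) (r : ℝ) (x : TComp V k) :
    castComp h (r • x) = r • castComp h x := map_smul _ r x

lemma castComp_add {k m : ℕ} (h : k = m) (x x' : TComp V k) :
    castComp h (x + x') = castComp h x + castComp h x' := map_add _ x x'

lemma castComp_zero {k m : ℕ} (h : k = m) :
    castComp h (0 : TComp V k) = 0 :=
  map_zero (PiTensorProduct.reindex ℝ (fun _ => V) (finCongr h))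

lemma castComp_sum {k m : ℕ} (h : k = m) {A : Type*} (s : Finset A) (f : A → TComp V k) :
    castComp h (∑ i ∈ s, f i) = ∑ i ∈ s, castComp h (f i) :=
  map_sum ((PiTensorProduct.reindex ℝ (fun _ => V) (finCongr h) :
    TComp V k ≃ₗ[ℝ] TComp V m).toLinearMap) f s

lemma castComp_rfl {k : ℕ} (h : k = k) (x : TComp V k) : castComp h x = x :=
  LinearEquiv.congr_fun (TensorPower.cast_refl ℝ V h) x

lemma castComp_castComp {i j k : ℕ} (h : i = j) (h' : j = k) (x : TComp V i) :
    castComp h' (castComp h x) = castComp (h.trans h') x :=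
  TensorPower.cast_cast h h' x

open PiTensorProduct in
lemma castComp_tprod {i j : ℕ} (h : i = j) (f : Fin i → V) :
    castComp h (tprod ℝ f) = tprod ℝ (f ∘ Fin.cast h.symm) :=
  TensorPower.cast_tprod ℝ V h f

open PiTensorProduct in
lemma mulComp_tprod {a b : ℕ} (f : Fin a → V) (g : Fin b → V) :
    mulComp (tprod ℝ f) (tprod ℝ g) = tprod ℝ (Fin.append f g) :=
  TensorPower.tprod_mul_tprod ℝ f g

open PiTensorProduct in
lemma mulComp_castComp_left {a a' b : ℕ} (h : a = a') (x : TComp V a) (y : TComp V b) :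
    mulComp (castComp h x) y = castComp (by rw [h]) (mulComp x y) := by
  induction x using PiTensorProduct.induction_on with
  | smul_tprod r f =>
    rw [castComp_smul, mulComp_smul_left, mulComp_smul_left, castComp_smul]
    congr 1
    induction y using PiTensorProduct.induction_on with
    | smul_tprod s g =>
      rw [mulComp_smul_right, mulComp_smul_right, castComp_smul]
      congr 1
      rw [castComp_tprod, mulComp_tprod, mulComp_tprod, castComp_tprod]
      congr 1
      exact Fin.append_cast_left f g a' h.symm
    | add u v hu hv =>
      rw [mulComp_add_right, mulComp_add_right, castComp_add, hu, hv]
  | add u v hu hv =>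
    rw [castComp_add, mulComp_add_left, mulComp_add_left, castComp_add, hu, hv]

open PiTensorProduct in
lemma mulComp_castComp_right {a b b' : ℕ} (h : b = b') (x : TComp V a) (y : TComp V b) :
    mulComp x (castComp h y) = castComp (by rw [h]) (mulComp x y) := by
  induction x using PiTensorProduct.induction_on with
  | smul_tprod r f =>
    rw [mulComp_smul_left, mulComp_smul_left, castComp_smul]
    congr 1
    induction y using PiTensorProduct.induction_on with
    | smul_tprod s g =>
      rw [castComp_smul, mulComp_smul_right, mulComp_smul_right, castComp_smul]
      congr 1
      rw [castComp_tprod, mulComp_tprod, mulComp_tprod, castComp_tprod]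
      congr 1
      exact Fin.append_cast_right f g b' h.symm
    | add u v hu hv =>
      rw [castComp_add, mulComp_add_right, mulComp_add_right, castComp_add, hu, hv]
  | add u v hu hv =>
    rw [mulComp_add_left, mulComp_add_left, castComp_add, hu, hv]

lemma mulComp_assoc {a b c : ℕ} (x : TComp V a) (y : TComp V b) (z : TComp V c) :
    castComp (add_assoc a b c) (mulComp (mulComp x y) z) = mulComp x (mulComp y z) :=
  TensorPower.mul_assoc x y z

lemma mulTo_zero_left {n a b : ℕ} (y : TComp V b) : mulTo n (0 : TComp V a) y = 0 := by
  unfold mulTo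
  split
  · rw [mulComp_zero_left, castComp_zero]
  · rfl

lemma mulTo_zero_right {n a b : ℕ} (x : TComp V a) : mulTo n x (0 : TComp V b) = 0 := by
  unfold mulTo
  split
  · rw [mulComp_zero_right, castComp_zero]
  · rfl

lemma mulTo_sum_left {n a b : ℕ} {A : Type*} (s : Finset A) (f : A → TComp V a)
    (y : TComp V b) : mulTo n (∑ i ∈ s, f i) y = ∑ i ∈ s, mulTo n (f i) y := by
  unfold mulTo
  split
  · rw [mulComp_sum_left, castComp_sum]
  · simp

lemma mulTo_sum_right {n a b : ℕ} {A : Type*} (s : Finset A) (x : TComp V a)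
    (f : A → TComp V b) : mulTo n x (∑ i ∈ s, f i) = ∑ i ∈ s, mulTo n x (f i) := by
  unfold mulTo
  split
  · rw [mulComp_sum_right, castComp_sum]
  · simp

lemma mulTo_assoc {a b c d e n : ℕ} (x : TComp V a) (y : TComp V b) (z : TComp V c)
    (hd : a + b = d) (he : b + c = e) :
    mulTo n (mulTo d x y) z = mulTo n x (mulTo e y z) := by
  subst hd he
  rw [mulTo_eq rfl x y, mulTo_eq rfl y z, castComp_rfl, castComp_rfl]
  by_cases hn : a + b + c = n
  · rw [mulTo_eq hn, mulTo_eq (by omega : a + (b + c) = n), ← mulComp_assoc,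
      castComp_castComp]
  · rw [mulTo, dif_neg hn, mulTo, dif_neg (by omega)]

lemma mulTo_one_left {n : ℕ} (x : TComp V n) :
    mulTo n (oneSeries (V := V) 0) x = x := by
  rw [mulTo_eq (Nat.zero_add n)]
  exact TensorPower.one_mul x

lemma mulTo_one_right {n : ℕ} (x : TComp V n) :
    mulTo n x (oneSeries (V := V) 0) = x := by
  rw [mulTo_eq (Nat.add_zero n)]
  exact TensorPower.mul_one x

/-! ### Series-level algebra -/

lemma seriesMul_eq (ξ η : TSeries V) (n : ℕ) :
    seriesMul ξ η n = ∑ k ∈ Finset.range (n + 1), mulTo n (ξ k) (η (n - k)) := by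
  rw [seriesMul, ← Finset.sum_attach (Finset.range (n + 1))
    (fun k => mulTo n (ξ k) (η (n - k)))]
  refine Finset.sum_congr rfl fun k _ => ?_
  rw [mulTo_eq (by have := Finset.mem_range.mp k.2; omega : k.1 + (n - k.1) = n)]

lemma one_seriesMul (ξ : TSeries V) : seriesMul oneSeries ξ = ξ := by
  funext n
  rw [seriesMul_eq]
  rw [Finset.sum_eq_single_of_mem 0 (Finset.mem_range.mpr (by omega)) ?side]
  · simp only [Nat.sub_zero]
    exact mulTo_one_left (ξ n)
  case side =>
    intro k _ hk
    obtain ⟨j, rfl⟩ := Nat.exists_eq_succ_of_ne_zero hk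
    show mulTo n (0 : TComp V (j + 1)) (ξ (n - (j + 1))) = 0
    exact mulTo_zero_left _

lemma seriesMul_one (ξ : TSeries V) : seriesMul ξ oneSeries = ξ := by
  funext n
  rw [seriesMul_eq]
  rw [Finset.sum_eq_single_of_mem n (Finset.mem_range.mpr (by omega)) ?side]
  · rw [Nat.sub_self]
    exact mulTo_one_right (ξ n)
  case side =>
    intro k hk hkn
    have hlt : k < n := lt_of_le_of_ne (Nat.lt_succ_iff.mp (Finset.mem_range.mp hk)) hkn
    obtain ⟨j, hj⟩ := Nat.exists_eq_succ_of_ne_zero (by omega : n - k ≠ 0)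
    rw [hj]
    show mulTo n (ξ k) (0 : TComp V (j + 1)) = 0
    exact mulTo_zero_right _

lemma seriesMul_assoc (ξ η ζ : TSeries V) :
    seriesMul (seriesMul ξ η) ζ = seriesMul ξ (seriesMul η ζ) := by
  funext n
  simp only [seriesMul_eq]
  have lhs_eq : ∀ j ∈ Finset.range (n + 1),
      mulTo n (∑ k ∈ Finset.range (j + 1), mulTo j (ξ k) (η (j - k))) (ζ (n - j)) =
      ∑ k ∈ Finset.range (j + 1), mulTo n (ξ k) (mulTo (n - k) (η (j - k)) (ζ (n - j))) := by
    intro j hj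
    rw [mulTo_sum_left]
    refine Finset.sum_congr rfl fun k hk => ?_
    have hkj : k ≤ j := Nat.lt_succ_iff.mp (Finset.mem_range.mp hk)
    have hjn : j ≤ n := Nat.lt_succ_iff.mp (Finset.mem_range.mp hj)
    exact mulTo_assoc _ _ _ (by omega) (by omega)
  have rhs_eq : ∀ k ∈ Finset.range (n + 1),
      mulTo n (ξ k) (∑ m ∈ Finset.range (n - k + 1), mulTo (n - k) (η m) (ζ (n - k - m))) =
      ∑ m ∈ Finset.range (n - k + 1), mulTo n (ξ k) (mulTo (n - k) (η m) (ζ (n - k - m))) := by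
    intro k _
    rw [mulTo_sum_right]
  rw [Finset.sum_congr rfl lhs_eq, Finset.sum_congr rfl rhs_eq]
  rw [Finset.sum_sigma', Finset.sum_sigma']
  refine Finset.sum_nbij' (fun x => ⟨x.2, x.1 - x.2⟩) (fun x => ⟨x.1 + x.2, x.1⟩)
    ?_ ?_ ?_ ?_ ?_
  · rintro ⟨j, k⟩ h
    simp only [Finset.mem_sigma, Finset.mem_range] at h ⊢
    omega
  · rintro ⟨k, m⟩ h
    simp only [Finset.mem_sigma, Finset.mem_range] at h ⊢
    omega
  · rintro ⟨j, k⟩ h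
    simp only [Finset.mem_sigma, Finset.mem_range] at h
    dsimp only
    have h1 : k + (j - k) = j := by omega
    rw [h1]
  · rintro ⟨k, m⟩ h
    simp only [Finset.mem_sigma, Finset.mem_range] at h
    dsimp only
    have h1 : k + m - k = m := by omega
    rw [h1]
  · rintro ⟨j, k⟩ h
    simp only [Finset.mem_sigma, Finset.mem_range] at h
    dsimp only
    have h2 : n - j = n - k - (j - k) := by omega
    rw [h2]

/-! ### Norm of a product series -/

lemma tnorm_seriesMul_le (ξ η : TSeries V) (n : ℕ) :
    tnorm (seriesMul ξ η n) ≤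
      ∑ k ∈ Finset.range (n + 1), tnorm (ξ k) * tnorm (η (n - k)) := by
  rw [seriesMul_eq]
  refine le_trans (seminorm_finset_sum_le PiTensorProduct.projectiveSeminorm _ _) ?_
  refine Finset.sum_le_sum fun k hk => ?_
  have h : k + (n - k) = n := by have := Finset.mem_range.mp hk; omega
  rw [show (PiTensorProduct.projectiveSeminorm (mulTo n (ξ k) (η (n - k))) : ℝ)
      = tnorm (mulTo n (ξ k) (η (n - k))) from rfl,
    mulTo_eq h, tnorm_castComp]
  exact tnorm_mulComp_le _ _

/-! ### Summability lemmas -/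

lemma infiniteROC_seriesMul {ξ η : TSeries V} (hξ : InfiniteROC ξ) (hη : InfiniteROC η) :
    InfiniteROC (seriesMul ξ η) := by
  intro z
  have hz : (0 : ℝ) ≤ |z| := abs_nonneg z
  have ha : Summable fun n => tnorm (ξ n) * |z| ^ n := hξ |z|
  have hb : Summable fun n => tnorm (η n) * |z| ^ n := hη |z|
  have hnn : ∀ (ζ : TSeries V) (n : ℕ), 0 ≤ tnorm (ζ n) * |z| ^ n :=
    fun ζ n => mul_nonneg (tnorm_nonneg _) (pow_nonneg hz n)
  have key : Summable fun n => ∑ k ∈ Finset.range (n + 1),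
      (tnorm (ξ k) * |z| ^ k) * (tnorm (η (n - k)) * |z| ^ (n - k)) := by
    have hfn : (fun n => ‖tnorm (ξ n) * |z| ^ n‖) = fun n => tnorm (ξ n) * |z| ^ n :=
      funext fun n => Real.norm_of_nonneg (hnn ξ n)
    have hgn : (fun n => ‖tnorm (η n) * |z| ^ n‖) = fun n => tnorm (η n) * |z| ^ n :=
      funext fun n => Real.norm_of_nonneg (hnn η n)
    have := summable_norm_sum_mul_range_of_summable_norm
      (f := fun n => tnorm (ξ n) * |z| ^ n) (g := fun n => tnorm (η n) * |z| ^ n)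
      (by rw [hfn]; exact ha) (by rw [hgn]; exact hb)
    refine this.congr fun n => ?_
    refine Real.norm_of_nonneg (Finset.sum_nonneg fun k _ => mul_nonneg (hnn ξ k) (hnn η _))
  apply Summable.of_abs
  have habs : (fun n => |tnorm (seriesMul ξ η n) * z ^ n|)
      = fun n => tnorm (seriesMul ξ η n) * |z| ^ n :=
    funext fun n => by rw [abs_mul, abs_of_nonneg (tnorm_nonneg _), abs_pow]
  rw [habs]
  refine Summable.of_nonneg_of_le (fun n => hnn _ n) (fun n => ?_) key
  calc tnorm (seriesMul ξ η n) * |z| ^ n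
      ≤ (∑ k ∈ Finset.range (n + 1), tnorm (ξ k) * tnorm (η (n - k))) * |z| ^ n :=
        mul_le_mul_of_nonneg_right (tnorm_seriesMul_le ξ η n) (pow_nonneg hz n)
  _ = ∑ k ∈ Finset.range (n + 1),
        (tnorm (ξ k) * |z| ^ k) * (tnorm (η (n - k)) * |z| ^ (n - k)) := by
      rw [Finset.sum_mul]
      refine Finset.sum_congr rfl fun k hk => ?_
      have hkn : k ≤ n := by have := Finset.mem_range.mp hk; omega
      have hpow : |z| ^ n = |z| ^ k * |z| ^ (n - k) := by
        rw [← pow_add]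
        congr 1
        omega
      rw [hpow]
      ring

lemma gamma_factorial_bound :
    ∃ c : ℝ, 0 < c ∧ c ≤ 1 ∧ ∀ (m : ℕ) (x : ℝ), (m : ℝ) ≤ x →
      c * m.factorial ≤ Real.Gamma (x + 1) := by
  have hcont : ContinuousOn Real.Gamma (Set.Icc (1 : ℝ) 2) := by
    intro x hx
    have hx0 : (0 : ℝ) < x := lt_of_lt_of_le one_pos hx.1
    refine (Real.differentiableAt_Gamma (fun m => ?_)).continuousAt.continuousWithinAt
    have : (0 : ℝ) ≤ (m : ℝ) := Nat.cast_nonneg m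
    intro hc
    rw [hc] at hx0
    linarith
  obtain ⟨x₀, hx₀, hmin⟩ := isCompact_Icc.exists_isMinOn
    (Set.nonempty_Icc.mpr one_le_two) hcont
  have hΓx₀ : 0 < Real.Gamma x₀ := Real.Gamma_pos_of_pos (lt_of_lt_of_le one_pos hx₀.1)
  refine ⟨min 1 (Real.Gamma x₀), lt_min one_pos hΓx₀, min_le_left _ _, ?_⟩
  intro m x hmx
  have hx0 : (0 : ℝ) ≤ x := le_trans (Nat.cast_nonneg m) hmx
  have hmono := Real.Gamma_strictMonoOn_Ici.monotoneOn
  by_cases hx1 : x ≤ 1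
  · have hm1 : m ≤ 1 := by exact_mod_cast le_trans hmx hx1
    have hfact : (m.factorial : ℝ) = 1 := by interval_cases m <;> simp [Nat.factorial]
    rw [hfact, mul_one]
    have hmem : x + 1 ∈ Set.Icc (1 : ℝ) 2 := ⟨by linarith, by linarith⟩
    calc min 1 (Real.Gamma x₀) ≤ Real.Gamma x₀ := min_le_right _ _
    _ ≤ Real.Gamma (x + 1) := hmin hmem
  · push_neg at hx1
    by_cases hm : m ≤ 1
    · have hfact : (m.factorial : ℝ) = 1 := by interval_cases m <;> simp [Nat.factorial]
      rw [hfact, mul_one]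
      have h2 : Real.Gamma 2 ≤ Real.Gamma (x + 1) :=
        hmono (by simp) (by simp only [Set.mem_Ici]; linarith) (by linarith)
      calc min 1 (Real.Gamma x₀) ≤ 1 := min_le_left _ _
      _ = Real.Gamma 2 := Real.Gamma_two.symm
      _ ≤ Real.Gamma (x + 1) := h2
    · push_neg at hm
      have hm2 : (2 : ℝ) ≤ (m : ℝ) := by exact_mod_cast hm
      have h2 : Real.Gamma ((m : ℝ) + 1) ≤ Real.Gamma (x + 1) :=
        hmono (by simp only [Set.mem_Ici]; linarith)
          (by simp only [Set.mem_Ici]; linarith) (by linarith)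
      rw [Real.Gamma_nat_eq_factorial] at h2
      calc min 1 (Real.Gamma x₀) * m.factorial ≤ 1 * m.factorial := by
            exact mul_le_mul_of_nonneg_right (min_le_left _ _) (by positivity)
      _ = (m.factorial : ℝ) := one_mul _
      _ ≤ Real.Gamma (x + 1) := h2

lemma summable_pow_div_factorial_div (s : ℝ) (hs : 0 ≤ s) (q : ℕ) (hq : 0 < q) :
    Summable fun n : ℕ => s ^ n / (n / q).factorial := by
  haveI : NeZero q := ⟨hq.ne'⟩
  have hW : (1 : ℝ) ≤ max 1 s := le_max_left _ _
  have hF : Summable fun m : ℕ => (max 1 s) ^ q * ((s ^ q) ^ m / (m.factorial : ℝ)) :=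
    (Real.summable_pow_div_factorial (s ^ q)).mul_left _
  have hG : Summable fun _ : Fin q => (1 : ℝ) := Summable.of_finite
  have hFG : Summable fun p : ℕ × Fin q =>
      ((max 1 s) ^ q * ((s ^ q) ^ p.1 / (p.1.factorial : ℝ))) * 1 :=
    hF.mul_of_nonneg hG (fun m => by positivity) (fun _ => zero_le_one)
  have key : Summable fun p : ℕ × Fin q => s ^ (p.1 * q + (p.2 : ℕ)) /
      ((p.1 * q + (p.2 : ℕ)) / q).factorial := by
    refine Summable.of_nonneg_of_le (fun p => by positivity) (fun p => ?_) hFG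
    obtain ⟨m, j⟩ := p
    have hdiv : (m * q + (j : ℕ)) / q = m := by
      rw [Nat.add_comm, Nat.add_mul_div_right _ _ hq, Nat.div_eq_of_lt j.is_lt, Nat.zero_add]
    dsimp only
    rw [hdiv, mul_one]
    have hnum : s ^ (m * q + (j : ℕ)) ≤ (max 1 s) ^ q * (s ^ q) ^ m := by
      have hj : s ^ (j : ℕ) ≤ (max 1 s) ^ q :=
        calc s ^ (j : ℕ) ≤ (max 1 s) ^ (j : ℕ) := pow_le_pow_left₀ hs (le_max_right _ _) _
        _ ≤ (max 1 s) ^ q := pow_le_pow_right₀ hW (le_of_lt j.is_lt)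
      calc s ^ (m * q + (j : ℕ)) = (s ^ q) ^ m * s ^ (j : ℕ) := by rw [pow_add, pow_mul']
      _ ≤ (s ^ q) ^ m * (max 1 s) ^ q :=
          mul_le_mul_of_nonneg_left hj (by positivity)
      _ = (max 1 s) ^ q * (s ^ q) ^ m := mul_comm _ _
    rw [← mul_div_assoc]
    gcongr
  have := ((Nat.divModEquiv q).symm.summable_iff
    (f := fun n : ℕ => s ^ n / (n / q).factorial)).mp ?_
  · exact this
  · refine key.congr fun p => ?_
    rfl

lemma factorialDecay_infiniteROC {ξ : TSeries V} (h : FactorialDecay ξ) : InfiniteROC ξ := by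
  obtain ⟨C, ω, p, hC, hω, hp, hbound⟩ := h
  intro z
  apply Summable.of_abs
  have habs : (fun n => |tnorm (ξ n) * z ^ n|) = fun n => tnorm (ξ n) * |z| ^ n :=
    funext fun n => by rw [abs_mul, abs_of_nonneg (tnorm_nonneg _), abs_pow]
  rw [habs]
  set r := |z| with hr
  have hr0 : (0 : ℝ) ≤ r := abs_nonneg z
  obtain ⟨c, hc, hc1, hgamma⟩ := gamma_factorial_bound
  set q : ℕ := ⌈p⌉₊ with hqdef
  have hq : 0 < q := Nat.ceil_pos.mpr (lt_of_lt_of_le one_pos hp)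
  have hpq : p ≤ (q : ℝ) := Nat.le_ceil p
  have hp0 : (0 : ℝ) < p := lt_of_lt_of_le one_pos hp
  set W : ℝ := max 1 ω with hWdef
  have hW1 : (1 : ℝ) ≤ W := le_max_left _ _
  refine (summable_nat_add_iff 1).mp ?_
  have hmaj : Summable fun n : ℕ => (C / c) * ((W * r) ^ (n + 1) / ((n + 1) / q).factorial) :=
    (((summable_nat_add_iff 1).mpr
      (summable_pow_div_factorial_div (W * r) (by positivity) q hq))).mul_left _
  refine Summable.of_nonneg_of_le
    (fun n => mul_nonneg (tnorm_nonneg _) (pow_nonneg hr0 _)) (fun n => ?_) hmaj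
  set N : ℕ := n + 1
  set E : ℝ := (N : ℝ) / p with hEdef
  have hE0 : 0 ≤ E := by positivity
  set m : ℕ := N / q with hmdef
  have hmE : (m : ℝ) ≤ E := by
    rw [hEdef, le_div_iff₀ hp0]
    have h1 : m * q ≤ N := Nat.div_mul_le_self N q
    have h1' : (m : ℝ) * (q : ℝ) ≤ (N : ℝ) := by exact_mod_cast h1
    calc (m : ℝ) * p ≤ (m : ℝ) * (q : ℝ) :=
          mul_le_mul_of_nonneg_left hpq (Nat.cast_nonneg m)
    _ ≤ (N : ℝ) := h1'
  have hΓ : c * m.factorial ≤ Real.Gamma (E + 1) := hgamma m E hmE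
  have hΓpos : (0 : ℝ) < c * m.factorial := by positivity
  have hων : ω ^ E ≤ W ^ N := by
    by_cases hω1 : ω ≤ 1
    · calc ω ^ E ≤ 1 := Real.rpow_le_one hω.le hω1 hE0
      _ = 1 ^ N := (one_pow N).symm
      _ ≤ W ^ N := pow_le_pow_left₀ zero_le_one hW1 N
    · push_neg at hω1
      have hEN : E ≤ (N : ℝ) := by
        rw [hEdef]
        exact div_le_self (Nat.cast_nonneg N) hp
      calc ω ^ E ≤ ω ^ (N : ℝ) := Real.rpow_le_rpow_of_exponent_le hω1.le hEN
      _ = ω ^ N := Real.rpow_natCast ω N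
      _ ≤ W ^ N := pow_le_pow_left₀ hω.le (le_max_right _ _) N
  have hb := hbound N (by omega)
  calc tnorm (ξ N) * r ^ N ≤ (C * ω ^ E / Real.Gamma (E + 1)) * r ^ N :=
        mul_le_mul_of_nonneg_right hb (pow_nonneg hr0 N)
  _ ≤ (C * W ^ N / (c * m.factorial)) * r ^ N := by
      refine mul_le_mul_of_nonneg_right ?_ (pow_nonneg hr0 N)
      refine div_le_div₀ (by positivity) ?_ hΓpos hΓ
      exact mul_le_mul_of_nonneg_left hων hC.le
  _ = (C / c) * ((W * r) ^ N / m.factorial) := by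
      have hfact : (m.factorial : ℝ) ≠ 0 := by positivity
      rw [mul_pow]
      field_simp

/-! ### Main theorem -/

/-- Let `l = log S(X)` and `g = S(Y)` for BV paths `X, Y` — or, more
generally, let `l ∈ T₀((V))` and let `g` be a tensor series with unit constant term,
two-sided inverse `g⁻¹`, both `g` and `g⁻¹` having factorial decay (as the signatures
`S(Y)`, `S(reverse Y)` do).  Since `log S(Y ⊔ X ⊔ reverse Y) = g ⊗ l ⊗ g⁻¹`, the
Lyons–Sidorova conjugation invariance reads:  `l` has infinite radius of convergence
if and only if `g ⊗ l ⊗ g⁻¹` has infinite radius of convergence. -/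
theorem log_signature_infinite_ROC_conjugation_invariant
    (l g ginv : TSeries V)
    (hl0 : l 0 = 0)
    (hg0 : g 0 = oneSeries 0) (hginv0 : ginv 0 = oneSeries 0)
    (hinv : seriesMul g ginv = oneSeries ∧ seriesMul ginv g = oneSeries)
    (hgdecay : FactorialDecay g) (hginvdecay : FactorialDecay ginv) :
    InfiniteROC l ↔ InfiniteROC (seriesMul (seriesMul g l) ginv) := by
  have hgROC : InfiniteROC g := factorialDecay_infiniteROC hgdecay
  have hginvROC : InfiniteROC ginv := factorialDecay_infiniteROC hginvdecay
  constructor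
  · intro hl
    exact infiniteROC_seriesMul (infiniteROC_seriesMul hgROC hl) hginvROC
  · intro hA
    have key : seriesMul (seriesMul ginv (seriesMul (seriesMul g l) ginv)) g = l := by
      rw [← seriesMul_assoc ginv (seriesMul g l) ginv,
        ← seriesMul_assoc ginv g l, hinv.2, one_seriesMul,
        seriesMul_assoc l ginv g, hinv.2, seriesMul_one]
    rw [← key]
    exact infiniteROC_seriesMul (infiniteROC_seriesMul hginvROC hA) hgROC

end
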